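/- A commutative ring R is a strong Prüfer ring (every finitely generated semi-regular ideal is locally principal) if and only if every finitely generated semi-regular ideal of R is flat. -/

import Mathlib

open TensorProduct

/-- An ideal is semi-regular if it contains a finitely generated subideal
with zero annihilator. -/
def Ideal.IsSemiregular {R : Type} [CommRing R] (I : Ideal R) : Prop :=
  ∃ J : Ideal R, J ≤ I ∧ J.FG ∧ Submodule.annihilator J = ⊥

section Aux

variable {R : Type} [CommRing R]

/-- `1 ⊗ ·` into a base change is a localized module when the algebra is a localization. -/
instance tensorIsLocalizedModule (p : Submonoid R) (S : Type) [CommRing S] [Algebra R S]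
    [IsLocalization p S] (N : Type) [AddCommGroup N] [Module R N] :
    IsLocalizedModule p (TensorProduct.mk R S N 1) :=
  (isLocalizedModule_iff_isBaseChange p S _).mpr (TensorProduct.isBaseChange _ _ _)

/-- The annihilator of the image of a finitely generated ideal with zero annihilator
in a localization is zero. -/
theorem annihilator_map_eq_bot (p : Submonoid R) (S : Type) [CommRing S] [Algebra R S]
    [IsLocalization p S] (J : Ideal R) (hfg : J.FG)
    (hann : Submodule.annihilator J = ⊥) :
    Submodule.annihilator (J.map (algebraMap R S)) = ⊥ := by
  classical
  rw [eq_bot_iff]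
  intro s hs
  rw [Submodule.mem_annihilator] at hs
  obtain ⟨T, hT⟩ := hfg
  obtain ⟨⟨r, t⟩, hrt⟩ := IsLocalization.surj p s
  have key : ∀ a : T, ∃ c : p, (c : R) * (r * (a : R)) = 0 := by
    rintro ⟨a, haT⟩
    have haJ : a ∈ J := hT ▸ Ideal.subset_span haT
    have h0 : s • (algebraMap R S a) = 0 := hs _ (Ideal.mem_map_of_mem _ haJ)
    rw [smul_eq_mul] at h0
    have h1 : algebraMap R S (r * a) = algebraMap R S 0 := by
      rw [map_mul, map_zero, ← hrt]
      calc s * algebraMap R S t * algebraMap R S a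
          = algebraMap R S t * (s * algebraMap R S a) := by ring
        _ = 0 := by rw [h0, mul_zero]
    obtain ⟨c, hc⟩ := (IsLocalization.eq_iff_exists p S).mp h1
    exact ⟨c, by simpa using hc⟩
  choose c hc using key
  set cc : p := ∏ a ∈ T.attach, c a with hcc
  have hccr : ∀ a, (ha : a ∈ T) → ((cc : R) * r) * a = 0 := by
    intro a haT
    have h2 : cc = c ⟨a, haT⟩ * ∏ b ∈ T.attach.erase ⟨a, haT⟩, c b :=
      (Finset.mul_prod_erase T.attach c (Finset.mem_attach T ⟨a, haT⟩)).symm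
    have h3 : (cc : R) = (c ⟨a, haT⟩ : R) * ((∏ b ∈ T.attach.erase ⟨a, haT⟩, c b : p) : R) := by
      rw [h2]; push_cast; ring
    rw [h3]
    calc (c ⟨a, haT⟩ : R) * ((∏ b ∈ T.attach.erase ⟨a, haT⟩, c b : p) : R) * r * a
        = ((∏ b ∈ T.attach.erase ⟨a, haT⟩, c b : p) : R) * ((c ⟨a, haT⟩ : R) * (r * a)) := by
          ring
      _ = 0 := by rw [hc ⟨a, haT⟩, mul_zero]
  have hmem : (cc : R) * r ∈ Submodule.annihilator J := by
    rw [Submodule.mem_annihilator]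
    intro n hn
    rw [← hT] at hn
    induction hn using Submodule.span_induction with
    | mem x hx => simpa [smul_eq_mul] using hccr x hx
    | zero => simp
    | add x y _ _ hx hy => rw [smul_add, hx, hy, add_zero]
    | smul a x _ hx => rw [smul_comm, hx, smul_zero]
  rw [hann, Submodule.mem_bot] at hmem
  have h3 : algebraMap R S r = algebraMap R S 0 :=
    (IsLocalization.eq_iff_exists p S).mpr ⟨cc, by rw [mul_zero, hmem]⟩
  rw [map_zero] at h3
  have h4 : s * algebraMap R S t = 0 * algebraMap R S t := by
    rw [hrt, zero_mul, h3]
  exact (IsLocalization.map_units S t).mul_right_cancel h4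

/-- A finitely generated flat ideal in a local ring is principal. -/
theorem Ideal.isPrincipal_of_fg_flat {S : Type} [CommRing S] [IsLocalRing S]
    (K : Ideal S) (hfg : K.FG) (hflat : Module.Flat S K) : K.IsPrincipal := by
  classical
  obtain ⟨T, hT⟩ := hfg
  set m := IsLocalRing.maximalIdeal S with hm
  set le : S → S → Prop := fun a b =>
    a ∈ Submodule.span S {b} ⊔ m • (K : Submodule S S) with hle
  have hrefl : ∀ a, le a a := fun a =>
    Submodule.mem_sup_left (Submodule.mem_span_singleton_self a)
  have htrans : ∀ a b d, le a b → le b d → le a d := by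
    intro a b d hab hbd
    have h1 : Submodule.span S {b} ≤ Submodule.span S {d} ⊔ m • (K : Submodule S S) :=
      Submodule.span_le.mpr (Set.singleton_subset_iff.mpr hbd)
    exact (sup_le h1 le_sup_right) hab
  have tri : ∀ a, a ∈ K → ∀ b, b ∈ K → (le a b ∨ le b a) := by
    intro a ha b hb
    have hrel : ∑ i : Fin 2, (![b, -a] i) • ((![(⟨a, ha⟩ : K), ⟨b, hb⟩] : Fin 2 → K) i) = 0 := by
      apply Subtype.ext
      push_cast [Fin.sum_univ_two, Matrix.cons_val_zero, Matrix.cons_val_one, Matrix.head_cons,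
        smul_eq_mul]
      ring
    obtain ⟨κ, cm, y, hxy, hcm⟩ := Module.Flat.isTrivialRelation_of_sum_smul_eq_zero hrel
    by_cases h0 : ∃ j, IsUnit (cm 0 j)
    · obtain ⟨j, hu⟩ := h0
      have hj := hcm j
      simp only [Fin.sum_univ_two, Matrix.cons_val_zero, Matrix.cons_val_one, Matrix.head_cons]
        at hj
      have hinv : cm 0 j * ↑hu.unit⁻¹ = 1 := hu.mul_val_inv
      have h5 : b * cm 0 j = a * cm 1 j := by linear_combination hj
      have hb' : b = (cm 1 j * ↑hu.unit⁻¹) * a := by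
        calc b = b * (cm 0 j * ↑hu.unit⁻¹) := by rw [hinv, mul_one]
          _ = (b * cm 0 j) * ↑hu.unit⁻¹ := by ring
          _ = (a * cm 1 j) * ↑hu.unit⁻¹ := by rw [h5]
          _ = (cm 1 j * ↑hu.unit⁻¹) * a := by ring
      right
      exact Submodule.mem_sup_left
        (Submodule.mem_span_singleton.mpr ⟨cm 1 j * ↑hu.unit⁻¹, by rw [smul_eq_mul, ← hb']⟩)
    · by_cases h1 : ∃ j, IsUnit (cm 1 j)
      · obtain ⟨j, hu⟩ := h1
        have hj := hcm j
        simp only [Fin.sum_univ_two, Matrix.cons_val_zero, Matrix.cons_val_one, Matrix.head_cons]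
          at hj
        have hinv : cm 1 j * ↑hu.unit⁻¹ = 1 := hu.mul_val_inv
        have h5 : b * cm 0 j = a * cm 1 j := by linear_combination hj
        have ha' : a = (cm 0 j * ↑hu.unit⁻¹) * b := by
          calc a = a * (cm 1 j * ↑hu.unit⁻¹) := by rw [hinv, mul_one]
            _ = (a * cm 1 j) * ↑hu.unit⁻¹ := by ring
            _ = (b * cm 0 j) * ↑hu.unit⁻¹ := by rw [h5]
            _ = (cm 0 j * ↑hu.unit⁻¹) * b := by ring
        left
        exact Submodule.mem_sup_left
          (Submodule.mem_span_singleton.mpr ⟨cm 0 j * ↑hu.unit⁻¹, by rw [smul_eq_mul, ← ha']⟩)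
      · left
        push_neg at h0
        have hxy0 := congrArg (Subtype.val) (hxy 0)
        simp only [Matrix.cons_val_zero] at hxy0
        have hmem : a ∈ m • (K : Submodule S S) := by
          rw [hxy0]
          push_cast
          apply Submodule.sum_mem
          intro j _
          exact Submodule.smul_mem_smul
            ((IsLocalRing.mem_maximalIdeal _).mpr (h0 j)) (y j).2
        exact Submodule.mem_sup_right hmem
  have hTK : (T : Set S) ⊆ (K : Set S) := by
    rw [← hT]; exact Submodule.subset_span
  have hmax : ∀ (U : Finset S), (↑U ⊆ (K : Set S)) → U.Nonempty →
      ∃ x ∈ U, ∀ z ∈ U, le z x := by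
    intro U
    induction U using Finset.induction_on with
    | empty => intro _ h; exact absurd h (by simp)
    | @insert a U haU ih =>
      intro hsub _
      have haK : a ∈ K := hsub (Finset.mem_insert_self a U)
      have hUK : (↑U : Set S) ⊆ (K : Set S) := fun z hz => hsub (Finset.mem_insert_of_mem hz)
      rcases U.eq_empty_or_nonempty with rfl | hne
      · refine ⟨a, Finset.mem_insert_self a _, fun z hz => ?_⟩
        rcases Finset.mem_insert.mp hz with rfl | hzU
        · exact hrefl z
        · exact absurd hzU (by simp)
      · obtain ⟨x, hxU, hx⟩ := ih hUK hne
        have hxK : x ∈ K := hUK hxU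
        rcases tri a haK x hxK with hax | hxa
        · refine ⟨x, Finset.mem_insert_of_mem hxU, fun z hz => ?_⟩
          rcases Finset.mem_insert.mp hz with rfl | hzU
          · exact hax
          · exact hx z hzU
        · refine ⟨a, Finset.mem_insert_self a U, fun z hz => ?_⟩
          rcases Finset.mem_insert.mp hz with rfl | hzU
          · exact hrefl z
          · exact htrans z x a (hx z hzU) hxa
  rcases T.eq_empty_or_nonempty with rfl | hTne
  · have hKbot : K = ⊥ := by rw [← hT]; simp
    exact ⟨⟨0, by rw [hKbot, Submodule.span_zero_singleton]⟩⟩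
  · obtain ⟨x, hxT, hx⟩ := hmax T hTK hTne
    have hKle : (K : Submodule S S) ≤ Submodule.span S {x} ⊔ m • (K : Submodule S S) := by
      have h6 : Submodule.span S (T : Set S) ≤
          Submodule.span S {x} ⊔ m • (K : Submodule S S) :=
        Submodule.span_le.mpr (fun z hz => hx z hz)
      rw [Ideal.submodule_span_eq, hT] at h6
      exact h6
    have hle2 := Submodule.le_of_le_smul_of_le_jacobson_bot ⟨T, hT⟩
      (IsLocalRing.maximalIdeal_le_jacobson ⊥) hKle
    have hxK : x ∈ K := hTK hxT
    exact ⟨⟨x, le_antisymm hle2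
      (Submodule.span_le.mpr (Set.singleton_subset_iff.mpr hxK))⟩⟩

/-- A principal ideal with zero annihilator is flat. -/
theorem flat_of_isPrincipal_of_annihilator {S : Type} [CommRing S] (K : Ideal S)
    (hp : K.IsPrincipal) (hann : Submodule.annihilator K = ⊥) :
    Module.Flat S K := by
  obtain ⟨a, ha⟩ := hp
  have haK : a ∈ K := ha ▸ Submodule.mem_span_singleton_self a
  let f : S →ₗ[S] K := LinearMap.toSpanSingleton S K ⟨a, haK⟩
  have hbij : Function.Bijective f := by
    constructor
    · intro s t h
      have h0 : ∀ u : S, u • (⟨a, haK⟩ : K) = 0 → u = 0 := by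
        intro u hu
        have hu' : u * a = 0 := congrArg Subtype.val hu
        have : u ∈ Submodule.annihilator K := by
          rw [Submodule.mem_annihilator]
          intro n hn
          rw [ha] at hn
          obtain ⟨v, rfl⟩ := Submodule.mem_span_singleton.mp hn
          calc u • (v • a) = v • (u * a) := by
                rw [smul_eq_mul, smul_eq_mul, smul_eq_mul]; ring
            _ = 0 := by rw [hu', smul_zero]
        rw [hann, Submodule.mem_bot] at this
        exact this
      have := h0 (s - t) (by rw [sub_smul, sub_eq_zero]; exact h)
      exact sub_eq_zero.mp this
    · rintro ⟨n, hn⟩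
      rw [ha] at hn
      obtain ⟨v, hv⟩ := Submodule.mem_span_singleton.mp hn
      exact ⟨v, Subtype.ext (by simpa [f, LinearMap.toSpanSingleton_apply] using hv)⟩
  exact Module.Flat.of_linearEquiv (LinearEquiv.ofBijective f hbij).symm

/-- Flatness can be checked on localizations at maximal ideals (base change form). -/
theorem Module.flat_of_flat_localizations (M : Type) [AddCommGroup M] [Module R M]
    (H : ∀ (P : Ideal R) [P.IsMaximal],
      Module.Flat (Localization.AtPrime P) (Localization.AtPrime P ⊗[R] M)) :
    Module.Flat R M := by
  rw [Module.Flat.iff_rTensor_injective']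
  intro J
  set F : J ⊗[R] M →ₗ[R] M :=
    (TensorProduct.lid R M).toLinearMap ∘ₗ LinearMap.rTensor M J.subtype with hF
  have hInj : Function.Injective F := by
    apply injective_of_isLocalized_maximal
      (fun (P : Ideal R) (hP : P.IsMaximal) => haveI := hP.isPrime; Localization.AtPrime P ⊗[R] (J ⊗[R] M))
      (fun (P : Ideal R) (hP : P.IsMaximal) => haveI := hP.isPrime; TensorProduct.mk R (Localization.AtPrime P) (J ⊗[R] M) 1)
      (fun (P : Ideal R) (hP : P.IsMaximal) => haveI := hP.isPrime; Localization.AtPrime P ⊗[R] M)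
      (fun (P : Ideal R) (hP : P.IsMaximal) => haveI := hP.isPrime; TensorProduct.mk R (Localization.AtPrime P) M 1)
    intro P hP
    haveI : P.IsMaximal := hP
    haveI := H P
    set S := Localization.AtPrime P with hS
    set p := P.primeCompl with hp
    haveI hfl : Module.Flat S (S ⊗[R] M) := H P
    let bc := IsLocalizedModule.isBaseChange p S (J.toLocalized' S p (Algebra.linearMap R S))
    let ν : (S ⊗[R] J) →ₗ[S] S :=
      (Submodule.subtype _) ∘ₗ bc.equiv.toLinearMap
    have hν : Function.Injective ν := by
      apply Function.Injective.comp (Submodule.injective_subtype _)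
      exact bc.equiv.injective
    let dd := TensorProduct.AlgebraTensorModule.distribBaseChange R S (↥J) M
    let φ : S ⊗[R] (J ⊗[R] M) →ₗ[S] S ⊗[R] M :=
      (TensorProduct.lid S (S ⊗[R] M)).toLinearMap
        ∘ₗ (LinearMap.rTensor (S ⊗[R] M) ν)
        ∘ₗ dd.toLinearMap
    have hφ : Function.Injective φ := by
      apply Function.Injective.comp (TensorProduct.lid S (S ⊗[R] M)).injective
      apply Function.Injective.comp
        (Module.Flat.rTensor_preserves_injective_linearMap ν hν)
      exact dd.injective
    have hcomm : (φ.restrictScalars R) ∘ₗ (TensorProduct.mk R S (J ⊗[R] M) 1) =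
        (TensorProduct.mk R S M 1) ∘ₗ F := by
      apply TensorProduct.ext'
      intro j mm
      have hd : dd ((1 : S) ⊗ₜ (j ⊗ₜ mm)) = ((1 : S) ⊗ₜ j) ⊗ₜ ((1 : S) ⊗ₜ mm) := by
        rw [show dd = TensorProduct.AlgebraTensorModule.distribBaseChange R S (↥J) M from rfl,
          TensorProduct.AlgebraTensorModule.distribBaseChange]
        rw [LinearEquiv.symm_apply_eq]
        simp
      simp only [LinearMap.coe_comp, Function.comp_apply, LinearMap.coe_restrictScalars,
        TensorProduct.mk_apply]
      rw [show φ ((1 : S) ⊗ₜ (j ⊗ₜ mm)) =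
        (TensorProduct.lid S (S ⊗[R] M)) ((LinearMap.rTensor (S ⊗[R] M) ν) (dd ((1:S) ⊗ₜ (j ⊗ₜ mm)))) from rfl]
      rw [hd]
      rw [LinearMap.rTensor_tmul, TensorProduct.lid_tmul]
      have hν1 : ν ((1 : S) ⊗ₜ j) = algebraMap R S j := by
        rw [show ν ((1:S) ⊗ₜ j) = ((bc.equiv ((1:S) ⊗ₜ j) : (J.localized' S p (Algebra.linearMap R S))) : S) from rfl]
        rw [bc.equiv_tmul]
        simp only [one_smul]
        rfl
      rw [hν1]
      have : F (j ⊗ₜ mm) = (j : R) • mm := by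
        simp [hF]
      rw [this, TensorProduct.tmul_smul, algebraMap_smul]
    have heq : IsLocalizedModule.map p (TensorProduct.mk R S (J ⊗[R] M) 1)
        (TensorProduct.mk R S M 1) F = φ.restrictScalars R := by
      apply IsLocalizedModule.ext p (TensorProduct.mk R S (J ⊗[R] M) 1)
        (IsLocalizedModule.map_units (TensorProduct.mk R S M 1))
      rw [IsLocalizedModule.map_comp]
      exact hcomm.symm
    rw [heq]
    exact hφ
  intro x y hxy
  apply hInj
  simp only [hF, LinearMap.coe_comp, Function.comp_apply, LinearEquiv.coe_coe]
  rw [hxy]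

end Aux

/-- `R` is a strong Prüfer ring (every finitely generated semi-regular ideal is
locally principal) iff every finitely generated semi-regular ideal of `R` is flat. -/
theorem strongPrufer_iff_fg_semiregular_flat (R : Type) [CommRing R] :
    (∀ I : Ideal R, I.FG → I.IsSemiregular →
      ∀ (𝔪 : Ideal R) (h𝔪 : 𝔪.IsMaximal),
        (I.map (algebraMap R (@Localization.AtPrime R _ 𝔪 h𝔪.isPrime))).IsPrincipal) ↔
      (∀ I : Ideal R, I.FG → I.IsSemiregular → Module.Flat R I) := by
  constructor
  · intro h I hfg hsr
    obtain ⟨J, hJI, hJfg, hJann⟩ := hsr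
    apply Module.flat_of_flat_localizations
    intro P hP
    haveI := hP.isPrime
    set S := Localization.AtPrime P with hS
    set p := P.primeCompl with hp
    have hprin : (I.map (algebraMap R S)).IsPrincipal := h I hfg ⟨J, hJI, hJfg, hJann⟩ P hP
    have hann2 : Submodule.annihilator (I.map (algebraMap R S)) = ⊥ := by
      rw [eq_bot_iff]
      refine le_trans (Submodule.annihilator_mono (Ideal.map_mono hJI)) ?_
      rw [annihilator_map_eq_bot p S J hJfg hJann]
    have hflatK : Module.Flat S (I.map (algebraMap R S)) :=
      flat_of_isPrincipal_of_annihilator _ hprin hann2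
    have hflatL : Module.Flat S (I.localized' S p (Algebra.linearMap R S)) := by
      rw [Ideal.localized'_eq_map S p I]
      exact hflatK
    exact Module.Flat.of_linearEquiv
      (IsLocalizedModule.isBaseChange p S (I.toLocalized' S p (Algebra.linearMap R S))).equiv
  · intro h I hfg hsr 𝔪 h𝔪
    haveI := h𝔪.isPrime
    set S := Localization.AtPrime 𝔪 with hS
    set p := 𝔪.primeCompl with hp
    haveI hflatI : Module.Flat R I := h I hfg hsr
    have hflatL : Module.Flat S (I.localized' S p (Algebra.linearMap R S)) :=
      Module.Flat.of_isLocalizedModule S p (I.toLocalized' S p (Algebra.linearMap R S))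
    have hflatK : Module.Flat S (I.map (algebraMap R S)) := by
      rw [← Ideal.localized'_eq_map S p I]
      exact hflatL
    exact Ideal.isPrincipal_of_fg_flat _ (Ideal.FG.map hfg _) hflatK
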